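/- Summation formula for the transfer matrix eigenvalue: let Q, R, φ : ℤ → ℂ satisfy R(u)·Q(u+2) − Q(u)·R(u+2) = φ(u) for all u ∈ ℤ, with Q(u) ≠ 0 for all u. Define T_s(u) := Q(u+s+1)·R(u−s−1) − R(u+s+1)·Q(u−s−1). Then for every integer s ≥ 0 and every u ∈ ℤ: T_s(u) = Q(u+s+1)·Q(u−s−1) · Σ_{j=0}^{s} φ(u−s+2j−1) / (Q(u−s+2j+1)·Q(u−s+2j−1)). -/

import Mathlib

/-- **Summation formula for the transfer matrix eigenvalue.**
Let `Q, R, φ : ℤ → ℂ` satisfy the wronskian relation `R(u)·Q(u+2) − Q(u)·R(u+2) = φ(u)` with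
`Q` nowhere zero, and set `T_s(u) = Q(u+s+1)·R(u−s−1) − R(u+s+1)·Q(u−s−1)`.  Then for every
`s ≥ 0`:
`T_s(u) = Q(u+s+1)·Q(u−s−1)·Σ_{j=0}^{s} φ(u−s+2j−1)/(Q(u−s+2j+1)·Q(u−s+2j−1))`. -/
theorem transfer_matrix_sum_formula (Q R φ : ℤ → ℂ)
    (hQnz : ∀ u : ℤ, Q u ≠ 0)
    (hW : ∀ u : ℤ, R u * Q (u+2) - Q u * R (u+2) = φ u)
    (T : ℤ → ℤ → ℂ)
    (hT : ∀ s u : ℤ, T s u = Q (u+s+1) * R (u-s-1) - R (u+s+1) * Q (u-s-1)) :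
    ∀ (s : ℕ) (u : ℤ),
      T (s : ℤ) u = Q (u+(s : ℤ)+1) * Q (u-(s : ℤ)-1) *
        ∑ j ∈ Finset.range (s+1),
          φ (u - (s : ℤ) + 2*(j : ℤ) - 1) /
            (Q (u - (s : ℤ) + 2*(j : ℤ) + 1) * Q (u - (s : ℤ) + 2*(j : ℤ) - 1)) := by
  intro s
  induction s with
  | zero =>
    intro u
    rw [hT]
    have h := hW (u-1)
    have h1 : u - 1 + 2 = u + 1 := by ring
    rw [h1] at h
    simp only [Nat.cast_zero, zero_add, Finset.sum_range_one, mul_zero, add_zero, sub_zero]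
    have hq1 := hQnz (u+1)
    have hq2 := hQnz (u-1)
    field_simp
    linear_combination h
  | succ s ih =>
    intro u
    have hIH := ih (u - 1)
    rw [hT] at hIH ⊢
    have hw := hW (u + s)
    push_cast
    rw [Finset.sum_range_succ]
    have hsum : (∑ j ∈ Finset.range (s+1),
        φ (u - (↑s+1) + 2*(j:ℤ) - 1) / (Q (u - (↑s+1) + 2*(j:ℤ) + 1) * Q (u - (↑s+1) + 2*(j:ℤ) - 1)))
      = ∑ j ∈ Finset.range (s+1),
        φ (u - 1 - ↑s + 2*(j:ℤ) - 1) / (Q (u - 1 - ↑s + 2*(j:ℤ) + 1) * Q (u - 1 - ↑s + 2*(j:ℤ) - 1)) := by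
      apply Finset.sum_congr rfl
      intro j _
      rw [show u - (↑s+1) + 2*(j:ℤ) - 1 = u - 1 - ↑s + 2*(j:ℤ) - 1 from by ring,
          show u - (↑s+1) + 2*(j:ℤ) + 1 = u - 1 - ↑s + 2*(j:ℤ) + 1 from by ring]
    rw [hsum]
    have hq1 := hQnz (u - 1 + ↑s + 1)
    have hq2 := hQnz (u - 1 - ↑s - 1)
    have hSum : (∑ j ∈ Finset.range (s+1),
        φ (u - 1 - ↑s + 2*(j:ℤ) - 1) / (Q (u - 1 - ↑s + 2*(j:ℤ) + 1) * Q (u - 1 - ↑s + 2*(j:ℤ) - 1)))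
      = (Q (u-1+↑s+1) * R (u-1-↑s-1) - R (u-1+↑s+1) * Q (u-1-↑s-1)) /
        (Q (u-1+↑s+1) * Q (u-1-↑s-1)) := by
      rw [hIH]
      field_simp
    rw [hSum]
    push_cast
    -- normalize arguments
    rw [show u - 1 + (↑s:ℤ) + 1 = u + ↑s from by ring,
        show u - 1 - (↑s:ℤ) - 1 = u - ↑s - 2 from by ring,
        show u + (↑s + 1) + 1 = u + ↑s + 2 from by ring,
        show u - (↑s + 1) - 1 = u - ↑s - 2 from by ring,
        show u - (↑s + 1) + 2*((↑s:ℤ) + 1) - 1 = u + ↑s from by ring,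
        show u - (↑s + 1) + 2*((↑s:ℤ) + 1) + 1 = u + ↑s + 2 from by ring,
        show u + ↑s + 2 = (u + ↑s) + 2 from by ring]
    have hq3 := hQnz (u + ↑s)
    have hq4 := hQnz (u + ↑s + 2)
    have hq5 := hQnz (u - ↑s - 2)
    field_simp
    linear_combination Q (u - ↑s - 2) * hw
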